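/- (Optimal repair, correctness half) Let k ≥ 3 be odd and fix an information column j ∈ {0,…,k−1}. Suppose two information arrays a, a′ : {0,…,2^{k−1}−1} × {0,…,k−1} → GF(2) satisfy: (i) a_{i′,j′} = a′_{i′,j′} for every i′ and every j′ ≠ j such that i′(j) = i′(j−1); (ii) h_{i}(a) = h_{i}(a′) for every i with i(j) = i(j−1); and (iii) b_{ℓ_{i,j}}(a) = b_{ℓ_{i,j}}(a′) for every i with i(j) ≠ i(j−1). Then a_{i,j} = a′_{i,j} for every i ∈ {0,…,2^{k−1}−1}. (That is, the erased information column j is determined by the stated half of the elements of each surviving node.) -/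

import Mathlib

/-- The `j`-th bit of `i` (`j ≥ 0`). -/
def bitp (i j : ℕ) : Bool := i.testBit j

/-- The `(j-1)`-th bit of `i`, with the convention that the bit at position `-1` is `0`. -/
def bitm (i j : ℕ) : Bool := if j = 0 then false else i.testBit (j - 1)

/-- `i` is dark in column `j` iff `i(j) = i(j-1)`. -/
def dark (i j : ℕ) : Prop := bitp i j = bitm i j

instance (i j : ℕ) : Decidable (dark i j) := by unfold dark; infer_instance

/-- `ℓ_{i,j} = i ⊕ (2^j - 1)`. -/
def ell (i j : ℕ) : ℕ := i ^^^ (2 ^ j - 1)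

/-- The set `B_{i,j}`. -/
def Bset (k i j : ℕ) : Finset (ℕ × ℕ) :=
  if dark i j then
    ((Finset.range k).filter
        (fun j' : ℕ => ((j : ℤ) - (j' : ℤ)) % (k : ℤ) ≤ ((k / 2 : ℕ) : ℤ))).image
      (fun j' => (i, j'))
  else {(i, j)}

/-- The butterfly support set `B_i = ⋃_{j ∈ [k]} B_{ℓ_{i,j}, j}`. -/
def Bline (k i : ℕ) : Finset (ℕ × ℕ) :=
  (Finset.range k).biUnion (fun j => Bset k (ell i j) j)

/-- Horizontal parity `h_i(a)`. -/
def hpar (k : ℕ) (a : ℕ → ℕ → ZMod 2) (i : ℕ) : ZMod 2 :=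
  ∑ j ∈ Finset.range k, a i j

/-- Butterfly parity `b_i(a)`. -/
def bpar (k : ℕ) (a : ℕ → ℕ → ZMod 2) (i : ℕ) : ZMod 2 :=
  ∑ p ∈ Bline k i, a p.1 p.2


lemma ell_lt {n : ℕ} (i j : ℕ) (hi : i < 2 ^ n) (hj : j ≤ n) : ell i j < 2 ^ n := by
  refine Nat.xor_lt_two_pow hi ?_
  calc 2 ^ j - 1 < 2 ^ j := Nat.sub_lt ((Nat.two_pow_pos j)) one_pos
    _ ≤ 2 ^ n := Nat.pow_le_pow_right (by norm_num) hj

lemma mem_Bset {k r t : ℕ} {p : ℕ × ℕ} (ht : t < k) (hp : p ∈ Bset k r t) :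
    p.1 = r ∧ p.2 < k := by
  unfold Bset at hp
  split at hp
  · obtain ⟨j', hj', rfl⟩ := Finset.mem_image.mp hp
    exact ⟨rfl, Finset.mem_range.mp (Finset.mem_filter.mp hj').1⟩
  · simp only [Finset.mem_singleton] at hp
    subst hp
    exact ⟨rfl, ht⟩

lemma testBit_ell (i j m : ℕ) : (ell i j).testBit m = ((i.testBit m).xor (decide (m < j))) := by
  simp [ell, Nat.testBit_xor, Nat.testBit_two_pow_sub_one]

lemma dark_of_white {i j t : ℕ} (hw : ¬ dark i j) (ht : t ≠ j) :
    dark (ell (ell i j) t) j := by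
  unfold dark bitp bitm at *
  by_cases hj0 : j = 0
  · subst hj0
    simp only [if_pos rfl] at hw ⊢
    have hi0 : i.testBit 0 = true := by
      cases h : i.testBit 0 with
      | false => exact absurd h hw
      | true => rfl
    rw [testBit_ell, testBit_ell, hi0]
    simp [Nat.pos_of_ne_zero ht]
  · simp only [if_neg hj0] at hw ⊢
    have hj1 : ¬ (j - 1 < j) → False := fun h => h (Nat.sub_lt (Nat.pos_of_ne_zero hj0) one_pos)
    have hd1 : decide (j - 1 < j) = true := by
      simp [Nat.sub_lt (Nat.pos_of_ne_zero hj0) one_pos]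
    simp only [ell, Nat.testBit_xor, Nat.testBit_two_pow_sub_one, hd1,
      Nat.lt_irrefl, decide_false]
    rcases Nat.lt_or_ge t j with hlt | hge
    · have h1 : decide (j < t) = false := by simp; omega
      have h2 : decide (j - 1 < t) = false := by simp; omega
      simp only [h1, h2]
      cases hb : i.testBit j <;> cases hb' : i.testBit (j-1) <;>
        simp_all
    · have htj : j < t := lt_of_le_of_ne hge (Ne.symm ht)
      have h1 : decide (j < t) = true := by simpa using htj
      have h2 : decide (j - 1 < t) = true := by simp; omega
      simp only [h1, h2]
      cases hb : i.testBit j <;> cases hb' : i.testBit (j-1) <;>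
        simp_all

/-- Optimal repair, correctness half: the erased information column `j` is determined by
the dark rows of the surviving information columns, the dark horizontal parities, and the
butterfly parities `b_{ℓ_{i,j}}` for white rows `i`. -/

theorem optimal_repair_correctness
    (k : ℕ) (hk : 3 ≤ k) (hodd : Odd k) (j : ℕ) (hj : j < k)
    (a a' : ℕ → ℕ → ZMod 2)
    (hinfo : ∀ i' < 2 ^ (k - 1), ∀ j' < k, j' ≠ j → dark i' j → a i' j' = a' i' j')
    (hhor : ∀ i < 2 ^ (k - 1), dark i j → hpar k a i = hpar k a' i)
    (hbut : ∀ i < 2 ^ (k - 1), ¬ dark i j →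
      bpar k a (ell i j) = bpar k a' (ell i j)) :
    ∀ i < 2 ^ (k - 1), a i j = a' i j := by
  have hjk1 : j ≤ k - 1 := by omega
  have step1 : ∀ i < 2 ^ (k - 1), dark i j → a i j = a' i j := by
    intro i hi hd
    have h := hhor i hi hd
    unfold hpar at h
    rw [← Finset.add_sum_erase _ (a i) (Finset.mem_range.mpr hj),
        ← Finset.add_sum_erase _ (a' i) (Finset.mem_range.mpr hj)] at h
    have heq : ∑ c ∈ (Finset.range k).erase j, a i c
        = ∑ c ∈ (Finset.range k).erase j, a' i c := by
      refine Finset.sum_congr rfl fun c hc => ?_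
      exact hinfo i hi c (Finset.mem_range.mp (Finset.mem_of_mem_erase hc))
        (Finset.ne_of_mem_erase hc) hd
    rw [heq] at h
    exact add_right_cancel h
  intro i hi
  by_cases hd : dark i j
  · exact step1 i hi hd
  · have hb := hbut i hi hd
    unfold bpar at hb
    have hcancel : ell (ell i j) j = i := by unfold ell; rw [Nat.xor_assoc, Nat.xor_self, Nat.xor_zero]
    have hmem : ((i, j) : ℕ × ℕ) ∈ Bline k (ell i j) := by
      refine Finset.mem_biUnion.mpr ⟨j, Finset.mem_range.mpr hj, ?_⟩
      rw [hcancel]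
      simp [Bset, hd]
    rw [← Finset.add_sum_erase _ (fun p => a p.1 p.2) hmem,
        ← Finset.add_sum_erase _ (fun p => a' p.1 p.2) hmem] at hb
    have heq : ∑ p ∈ (Bline k (ell i j)).erase (i, j), a p.1 p.2
        = ∑ p ∈ (Bline k (ell i j)).erase (i, j), a' p.1 p.2 := by
      refine Finset.sum_congr rfl fun p hp => ?_
      have hne := Finset.ne_of_mem_erase hp
      obtain ⟨t, ht, hpB⟩ := Finset.mem_biUnion.mp (Finset.mem_of_mem_erase hp)
      have htk := Finset.mem_range.mp ht
      have htj : t ≠ j := by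
        rintro rfl
        rw [hcancel] at hpB
        simp [Bset, hd] at hpB
        exact hne hpB
      obtain ⟨hp1, hp2⟩ := mem_Bset htk hpB
      have hdark : dark p.1 j := hp1 ▸ dark_of_white hd htj
      have hlt : p.1 < 2 ^ (k - 1) := by
        rw [hp1]
        exact ell_lt _ _ (ell_lt _ _ hi hjk1) (by omega)
      by_cases hpj : p.2 = j
      · rw [hpj]; exact step1 _ hlt hdark
      · exact hinfo _ hlt _ hp2 hpj hdark
    rw [heq] at hb
    exact add_right_cancel hb
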